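/- Let U : ℝ² ∖ {(0,0), (1,0)} → ℝ be defined by U(q) := −(1/2)/‖q‖ − (1/2)/‖q − (1,0)‖. Then for every c < −2, the set {(0,0)} ∪ { q ∈ ℝ² : q ≠ (0,0), q₁ < 1/2, and U(q) ≤ c } is a convex subset of ℝ². -/

import Mathlib

set_option maxHeartbeats 1000000
set_option maxRecDepth 8000
private lemma cert (x z : ℝ) (hx : 0 < x) (hz : 0 < z)
    (hH : 0 ≤ ((-1:ℝ)/2)*z + ((1:ℝ)/4)*z^2 + (1:ℝ)*x*z + ((1:ℝ)/2)*x^2 + ((3:ℝ)/2)*z^3 + (3:ℝ)*x*z^2 + ((3:ℝ)/2)*x^2*z + ((3:ℝ)/4)*z^4 + ((3:ℝ)/2)*x*z^3 + ((3:ℝ)/4)*x^2*z^2) :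
    0 < ((-3:ℝ)/32)*z^3 + ((-3:ℝ)/16)*x*z^2 + ((-3:ℝ)/32)*x^2*z + ((-19:ℝ)/64)*z^4 + ((1:ℝ)/32)*x*z^3 + ((81:ℝ)/64)*x^2*z^2 + ((5:ℝ)/4)*x^3*z + ((5:ℝ)/16)*x^4 + ((35:ℝ)/64)*z^5 + ((169:ℝ)/32)*x*z^4 + ((705:ℝ)/64)*x^2*z^3 + ((67:ℝ)/8)*x^3*z^2 + ((67:ℝ)/32)*x^4*z + ((691:ℝ)/128)*z^6 + ((1605:ℝ)/64)*x*z^5 + ((5325:ℝ)/128)*x^2*z^4 + ((481:ℝ)/16)*x^3*z^3 + ((561:ℝ)/64)*x^4*z^2 + ((3:ℝ)/4)*x^5*z + ((1:ℝ)/8)*x^6 + ((2165:ℝ)/128)*z^7 + ((4471:ℝ)/64)*x*z^6 + ((14511:ℝ)/128)*x^2*z^5 + ((1459:ℝ)/16)*x^3*z^4 + ((2479:ℝ)/64)*x^4*z^3 + ((153:ℝ)/16)*x^5*z^2 + ((51:ℝ)/32)*x^6*z + ((2149:ℝ)/64)*z^8 + ((9217:ℝ)/64)*x*z^7 + ((33429:ℝ)/128)*x^2*z^6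 + ((8465:ℝ)/32)*x^3*z^5 + ((21677:ℝ)/128)*x^4*z^4 + ((2385:ℝ)/32)*x^5*z^3 + ((1467:ℝ)/64)*x^6*z^2 + ((9:ℝ)/2)*x^7*z + ((9:ℝ)/16)*x^8 + ((373:ℝ)/8)*z^9 + ((14127:ℝ)/64)*x*z^8 + ((59283:ℝ)/128)*x^2*z^7 + ((18293:ℝ)/32)*x^3*z^6 + ((59265:ℝ)/128)*x^4*z^5 + ((8229:ℝ)/32)*x^5*z^4 + ((6215:ℝ)/64)*x^6*z^3 + ((93:ℝ)/4)*x^7*z^2 + ((93:ℝ)/32)*x^8*z + ((713:ℝ)/16)*z^10 + ((1873:ℝ)/8)*x*z^9 + ((17763:ℝ)/32)*x^2*z^8 + ((25039:ℝ)/32)*x^3*z^7 + ((92533:ℝ)/128)*x^4*z^6 + ((28917:ℝ)/64)*x^5*z^5 + ((24087:ℝ)/128)*x^6*z^4 + ((387:ℝ)/8)*x^7*z^3 + ((387:ℝ)/64)*x^8*z^2 + ((55:ℝ)/2)*z^11 + ((2525:ℝ)/16)*x*z^10 + ((3279:ℝ)/8)*x^2*z^9 + ((20209:ℝ)/32)*x^3*z^8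 + ((81067:ℝ)/128)*x^4*z^7 + ((27195:ℝ)/64)*x^5*z^6 + ((23961:ℝ)/128)*x^6*z^5 + ((399:ℝ)/8)*x^7*z^4 + ((399:ℝ)/64)*x^8*z^3 + ((39:ℝ)/4)*z^12 + (60:ℝ)*x*z^11 + ((2667:ℝ)/16)*x^2*z^10 + ((2187:ℝ)/8)*x^3*z^9 + ((18549:ℝ)/64)*x^4*z^8 + ((13041:ℝ)/64)*x^5*z^7 + ((11907:ℝ)/128)*x^6*z^6 + ((405:ℝ)/16)*x^7*z^5 + ((405:ℝ)/128)*x^8*z^4 + ((3:ℝ)/2)*z^13 + ((39:ℝ)/4)*x*z^12 + ((57:ℝ)/2)*x^2*z^11 + ((783:ℝ)/16)*x^3*z^10 + (54:ℝ)*x^4*z^9 + ((2511:ℝ)/64)*x^5*z^8 + ((2349:ℝ)/128)*x^6*z^7 + ((81:ℝ)/16)*x^7*z^6 + ((81:ℝ)/128)*x^8*z^5 := by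
  have hs : 0 ≤ ((3:ℝ)/16)*z^2 + ((3:ℝ)/8)*x*z + ((3:ℝ)/16)*x^2 + ((19:ℝ)/16)*z^3 + ((1:ℝ)/2)*x*z^2 + ((1:ℝ)/16)*z^4 := by positivity
  have hR2 : 0 < ((1:ℝ)/4)*z^4 + ((3:ℝ)/4)*x^2*z^2 + ((7:ℝ)/8)*x^3*z + ((7:ℝ)/32)*x^4 + ((91:ℝ)/32)*x*z^4 + ((527:ℝ)/64)*x^2*z^3 + (7:ℝ)*x^3*z^2 + ((29:ℝ)/16)*x^4*z + ((443:ℝ)/128)*z^6 + ((1289:ℝ)/64)*x*z^5 + ((4793:ℝ)/128)*x^2*z^4 + ((115:ℝ)/4)*x^3*z^3 + ((69:ℝ)/8)*x^4*z^2 + ((3:ℝ)/4)*x^5*z + ((1:ℝ)/8)*x^6 + ((2039:ℝ)/128)*z^7 + ((4321:ℝ)/64)*x*z^6 + ((14289:ℝ)/128)*x^2*z^5 + ((1453:ℝ)/16)*x^3*z^4 + ((2479:ℝ)/64)*x^4*z^3 + ((153:ℝ)/16)*x^5*z^2 + ((51:ℝ)/32)*x^6*z + ((1073:ℝ)/32)*z^8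 + ((9211:ℝ)/64)*x*z^7 + ((33423:ℝ)/128)*x^2*z^6 + ((8465:ℝ)/32)*x^3*z^5 + ((21677:ℝ)/128)*x^4*z^4 + ((2385:ℝ)/32)*x^5*z^3 + ((1467:ℝ)/64)*x^6*z^2 + ((9:ℝ)/2)*x^7*z + ((9:ℝ)/16)*x^8 + ((373:ℝ)/8)*z^9 + ((14127:ℝ)/64)*x*z^8 + ((59283:ℝ)/128)*x^2*z^7 + ((18293:ℝ)/32)*x^3*z^6 + ((59265:ℝ)/128)*x^4*z^5 + ((8229:ℝ)/32)*x^5*z^4 + ((6215:ℝ)/64)*x^6*z^3 + ((93:ℝ)/4)*x^7*z^2 + ((93:ℝ)/32)*x^8*z + ((713:ℝ)/16)*z^10 + ((1873:ℝ)/8)*x*z^9 + ((17763:ℝ)/32)*x^2*z^8 + ((25039:ℝ)/32)*x^3*z^7 + ((92533:ℝ)/128)*x^4*z^6 + ((28917:ℝ)/64)*x^5*z^5 + ((24087:ℝ)/128)*x^6*z^4 + ((387:ℝ)/8)*x^7*z^3 + ((387:ℝ)/64)*x^8*z^2 + ((55:ℝ)/2)*z^11 + ((2525:ℝ)/16)*x*z^10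 + ((3279:ℝ)/8)*x^2*z^9 + ((20209:ℝ)/32)*x^3*z^8 + ((81067:ℝ)/128)*x^4*z^7 + ((27195:ℝ)/64)*x^5*z^6 + ((23961:ℝ)/128)*x^6*z^5 + ((399:ℝ)/8)*x^7*z^4 + ((399:ℝ)/64)*x^8*z^3 + ((39:ℝ)/4)*z^12 + (60:ℝ)*x*z^11 + ((2667:ℝ)/16)*x^2*z^10 + ((2187:ℝ)/8)*x^3*z^9 + ((18549:ℝ)/64)*x^4*z^8 + ((13041:ℝ)/64)*x^5*z^7 + ((11907:ℝ)/128)*x^6*z^6 + ((405:ℝ)/16)*x^7*z^5 + ((405:ℝ)/128)*x^8*z^4 + ((3:ℝ)/2)*z^13 + ((39:ℝ)/4)*x*z^12 + ((57:ℝ)/2)*x^2*z^11 + ((783:ℝ)/16)*x^3*z^10 + (54:ℝ)*x^4*z^9 + ((2511:ℝ)/64)*x^5*z^8 + ((2349:ℝ)/128)*x^6*z^7 + ((81:ℝ)/16)*x^7*z^6 + ((81:ℝ)/128)*x^8*z^5 := by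
    have h40 : 0 < x^4 := pow_pos hx 4
    linarith [pow_nonneg hz.le 4,
    pow_nonneg hz.le 6,
    pow_nonneg hz.le 7,
    pow_nonneg hz.le 8,
    pow_nonneg hz.le 9,
    pow_nonneg hz.le 10,
    pow_nonneg hz.le 11,
    pow_nonneg hz.le 12,
    pow_nonneg hz.le 13,
    mul_nonneg (pow_nonneg hx.le 1) (pow_nonneg hz.le 4),
    mul_nonneg (pow_nonneg hx.le 1) (pow_nonneg hz.le 5),
    mul_nonneg (pow_nonneg hx.le 1) (pow_nonneg hz.le 6),
    mul_nonneg (pow_nonneg hx.le 1) (pow_nonneg hz.le 7),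
    mul_nonneg (pow_nonneg hx.le 1) (pow_nonneg hz.le 8),
    mul_nonneg (pow_nonneg hx.le 1) (pow_nonneg hz.le 9),
    mul_nonneg (pow_nonneg hx.le 1) (pow_nonneg hz.le 10),
    mul_nonneg (pow_nonneg hx.le 1) (pow_nonneg hz.le 11),
    mul_nonneg (pow_nonneg hx.le 1) (pow_nonneg hz.le 12),
    mul_nonneg (pow_nonneg hx.le 2) (pow_nonneg hz.le 2),
    mul_nonneg (pow_nonneg hx.le 2) (pow_nonneg hz.le 3),
    mul_nonneg (pow_nonneg hx.le 2) (pow_nonneg hz.le 4),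
    mul_nonneg (pow_nonneg hx.le 2) (pow_nonneg hz.le 5),
    mul_nonneg (pow_nonneg hx.le 2) (pow_nonneg hz.le 6),
    mul_nonneg (pow_nonneg hx.le 2) (pow_nonneg hz.le 7),
    mul_nonneg (pow_nonneg hx.le 2) (pow_nonneg hz.le 8),
    mul_nonneg (pow_nonneg hx.le 2) (pow_nonneg hz.le 9),
    mul_nonneg (pow_nonneg hx.le 2) (pow_nonneg hz.le 10),
    mul_nonneg (pow_nonneg hx.le 2) (pow_nonneg hz.le 11),
    mul_nonneg (pow_nonneg hx.le 3) (pow_nonneg hz.le 1),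
    mul_nonneg (pow_nonneg hx.le 3) (pow_nonneg hz.le 2),
    mul_nonneg (pow_nonneg hx.le 3) (pow_nonneg hz.le 3),
    mul_nonneg (pow_nonneg hx.le 3) (pow_nonneg hz.le 4),
    mul_nonneg (pow_nonneg hx.le 3) (pow_nonneg hz.le 5),
    mul_nonneg (pow_nonneg hx.le 3) (pow_nonneg hz.le 6),
    mul_nonneg (pow_nonneg hx.le 3) (pow_nonneg hz.le 7),
    mul_nonneg (pow_nonneg hx.le 3) (pow_nonneg hz.le 8),
    mul_nonneg (pow_nonneg hx.le 3) (pow_nonneg hz.le 9),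
    mul_nonneg (pow_nonneg hx.le 3) (pow_nonneg hz.le 10),
    pow_nonneg hx.le 4,
    mul_nonneg (pow_nonneg hx.le 4) (pow_nonneg hz.le 1),
    mul_nonneg (pow_nonneg hx.le 4) (pow_nonneg hz.le 2),
    mul_nonneg (pow_nonneg hx.le 4) (pow_nonneg hz.le 3),
    mul_nonneg (pow_nonneg hx.le 4) (pow_nonneg hz.le 4),
    mul_nonneg (pow_nonneg hx.le 4) (pow_nonneg hz.le 5),
    mul_nonneg (pow_nonneg hx.le 4) (pow_nonneg hz.le 6),
    mul_nonneg (pow_nonneg hx.le 4) (pow_nonneg hz.le 7),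
    mul_nonneg (pow_nonneg hx.le 4) (pow_nonneg hz.le 8),
    mul_nonneg (pow_nonneg hx.le 4) (pow_nonneg hz.le 9),
    mul_nonneg (pow_nonneg hx.le 5) (pow_nonneg hz.le 1),
    mul_nonneg (pow_nonneg hx.le 5) (pow_nonneg hz.le 2),
    mul_nonneg (pow_nonneg hx.le 5) (pow_nonneg hz.le 3),
    mul_nonneg (pow_nonneg hx.le 5) (pow_nonneg hz.le 4),
    mul_nonneg (pow_nonneg hx.le 5) (pow_nonneg hz.le 5),
    mul_nonneg (pow_nonneg hx.le 5) (pow_nonneg hz.le 6),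
    mul_nonneg (pow_nonneg hx.le 5) (pow_nonneg hz.le 7),
    mul_nonneg (pow_nonneg hx.le 5) (pow_nonneg hz.le 8),
    pow_nonneg hx.le 6,
    mul_nonneg (pow_nonneg hx.le 6) (pow_nonneg hz.le 1),
    mul_nonneg (pow_nonneg hx.le 6) (pow_nonneg hz.le 2),
    mul_nonneg (pow_nonneg hx.le 6) (pow_nonneg hz.le 3),
    mul_nonneg (pow_nonneg hx.le 6) (pow_nonneg hz.le 4),
    mul_nonneg (pow_nonneg hx.le 6) (pow_nonneg hz.le 5),
    mul_nonneg (pow_nonneg hx.le 6) (pow_nonneg hz.le 6),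
    mul_nonneg (pow_nonneg hx.le 6) (pow_nonneg hz.le 7),
    mul_nonneg (pow_nonneg hx.le 7) (pow_nonneg hz.le 1),
    mul_nonneg (pow_nonneg hx.le 7) (pow_nonneg hz.le 2),
    mul_nonneg (pow_nonneg hx.le 7) (pow_nonneg hz.le 3),
    mul_nonneg (pow_nonneg hx.le 7) (pow_nonneg hz.le 4),
    mul_nonneg (pow_nonneg hx.le 7) (pow_nonneg hz.le 5),
    mul_nonneg (pow_nonneg hx.le 7) (pow_nonneg hz.le 6),
    pow_nonneg hx.le 8,
    mul_nonneg (pow_nonneg hx.le 8) (pow_nonneg hz.le 1),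
    mul_nonneg (pow_nonneg hx.le 8) (pow_nonneg hz.le 2),
    mul_nonneg (pow_nonneg hx.le 8) (pow_nonneg hz.le 3),
    mul_nonneg (pow_nonneg hx.le 8) (pow_nonneg hz.le 4),
    mul_nonneg (pow_nonneg hx.le 8) (pow_nonneg hz.le 5)]
  linarith [mul_nonneg hs hH, hR2]

private lemma FI_pos (r s : ℝ) (hr2 : 2*r < 1) (hrs : 1 < r + s)
    (hH : 2*(r^2 - ((1+r^2-s^2)/2)^2) ≤ (s^2-r^2)^2) :
    0 < 2*(r^3+s^3)*(r^3 - (1+r^2-s^2)/2*(r^3+s^3))^2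
        + ((r^3+s^3)^3 - 3*(r^3*s^3)*(r+s))*(s^2-r^2)^2 := by
  have hx : 0 < 1 - 2*r := by linarith
  have hz : 0 < r + s - 1 := by linarith
  have hh : 0 ≤ ((-1:ℝ)/2)*(r+s-1) + ((1:ℝ)/4)*(r+s-1)^2 + (1:ℝ)*(1-2*r)*(r+s-1) + ((1:ℝ)/2)*(1-2*r)^2 + ((3:ℝ)/2)*(r+s-1)^3 + (3:ℝ)*(1-2*r)*(r+s-1)^2 + ((3:ℝ)/2)*(1-2*r)^2*(r+s-1) + ((3:ℝ)/4)*(r+s-1)^4 + ((3:ℝ)/2)*(1-2*r)*(r+s-1)^3 + ((3:ℝ)/4)*(1-2*r)^2*(r+s-1)^2 := by linarith [hH]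
  have h := cert (1-2*r) (r+s-1) hx hz hh
  linarith [h]

private lemma core_G (u v r s : ℝ) (hr : 0 < r) (hs : 0 < s) (hv : v ≠ 0)
    (hru : r^2 = u^2 + v^2) (hsu : s^2 = (u-1)^2 + v^2)
    (hr2 : 2*r < 1) (hwedge : 2*v^2 ≤ (1-2*u)^2) :
    3*(r^3*s^3)*((r+s)*v^2) < (r^3+s^3)*((r^3+s^3)^2*v^2 + (r^3 - u*(r^3+s^3))^2) := by
  have hv2 : 0 < v^2 := by rcases hv.lt_or_gt with h|h <;> nlinarith
  have hu : s^2 - r^2 = 1 - 2*u := by linear_combination hsu - hru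
  have huval : u = (1+r^2-s^2)/2 := by linarith
  have hvval : v^2 = r^2 - u^2 := by linarith [hru]
  have hD : (r*s - (u^2-u+v^2))*(r*s + (u^2-u+v^2)) = v^2 := by
    linear_combination s^2 * hru + (u^2+v^2) * hsu
  have hDpos : 0 < r*s + (u^2-u+v^2) := by
    rcases le_or_gt (u^2-u+v^2) 0 with h|h
    · nlinarith [mul_pos hr hs]
    · nlinarith [mul_nonneg hr.le hs.le, hD, hv2]
  have hrs1 : 1 < r + s := by nlinarith [hD, hDpos, hv2]
  have hw' : 2*v^2 ≤ (s^2-r^2)^2 := by rw [hu]; exact hwedge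
  have hH : 2*(r^2 - ((1+r^2-s^2)/2)^2) ≤ (s^2-r^2)^2 := by
    rw [← huval]; nlinarith [hw', hvval]
  have hFI := FI_pos r s hr2 hrs1 hH
  rw [← huval] at hFI
  by_cases hB : (r^3+s^3)^3 - 3*(r^3*s^3)*(r+s) < 0
  · have hprod : 0 ≤ (-( (r^3+s^3)^3 - 3*(r^3*s^3)*(r+s))) * ((s^2-r^2)^2/2 - v^2) := by
      apply mul_nonneg (by linarith) (by linarith)
    nlinarith [hFI, hprod]
  · push_neg at hB
    by_cases hT : r^3 - u*(r^3+s^3) = 0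
    · have h2 : 2*(r^3+s^3)*(r^3 - u*(r^3+s^3))^2 = 0 := by rw [hT]; ring
      have hBpos : 0 < (r^3+s^3)^3 - 3*(r^3*s^3)*(r+s) := by
        rcases eq_or_lt_of_le hB with h|h
        · exfalso
          have h3 : ((r^3+s^3)^3 - 3*(r^3*s^3)*(r+s))*(s^2-r^2)^2 = 0 := by rw [← h]; ring
          linarith [hFI, h2, h3]
        · exact h
      have h4 : (r^3+s^3)*(r^3 - u*(r^3+s^3))^2 = 0 := by rw [hT]; ring
      have h5 := mul_pos hBpos hv2
      nlinarith [h4, h5]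
    · have hApos : 0 < r^3 + s^3 := by positivity
      have hT2 : 0 < (r^3 - u*(r^3+s^3))^2 := pow_two_pos_of_ne_zero hT
      nlinarith [mul_pos hApos hT2, mul_nonneg hB hv2.le]

private lemma deriv2_neg (u v w1 w2 r s : ℝ) (hr : 0 < r) (hs : 0 < s)
    (hru : r^2 = u^2+v^2) (hsu : s^2 = (u-1)^2+v^2)
    (hr2 : 2*r < 1) (hs2 : 1 ≤ 2*s)
    (hw : ¬(w1 = 0 ∧ w2 = 0))
    (hwedge : 2*v^2 ≤ (1-2*u)^2)
    (hcrit : (u*w1+v*w2)*s^3 + ((u-1)*w1+v*w2)*r^3 = 0) :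
    3*(u*w1+v*w2)^2*s^5 + 3*((u-1)*w1+v*w2)^2*r^5 < (w1^2+w2^2)*(r^2*s^5+s^2*r^5) := by
  have hW : 0 < w1^2+w2^2 := by
    rcases not_and_or.mp hw with h|h
    · nlinarith [pow_two_pos_of_ne_zero h, sq_nonneg w2]
    · nlinarith [pow_two_pos_of_ne_zero h, sq_nonneg w1]
  have hKpos : 0 < r^2*s^5+s^2*r^5 := by positivity
  by_cases hP1 : u*w1+v*w2 = 0
  · have h3 : ((u-1)*w1+v*w2)*r^3 = 0 := by
      rw [hP1] at hcrit; linarith [hcrit]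
    have hr3 : r^3 ≠ 0 := by positivity
    have hP2 : ((u-1)*w1+v*w2) = 0 := (mul_eq_zero.mp h3).resolve_right hr3
    rw [hP1, hP2]
    nlinarith [mul_pos hW hKpos]
  · have hv : v ≠ 0 := by
      intro hv0
      subst hv0
      have hu1 : u < 1/2 := by nlinarith [hru]
      have h0 : (s - (1-u))*(s+(1-u)) = 0 := by linear_combination hsu
      have hsval : s = 1 - u := by
        rcases mul_eq_zero.mp h0 with h|h
        · linarith
        · exfalso; linarith
      rcases eq_or_ne w1 0 with hw1|hw1
      · apply hP1; rw [hw1]; ring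
      · have hfac : w1*(s*(u*s^2 - r^3)) = 0 := by
          linear_combination hcrit + (-(w1*r^3))*hsval
        have h4 : s*(u*s^2-r^3) = 0 := (mul_eq_zero.mp hfac).resolve_left hw1
        have hkey : u*s^2 - r^3 = 0 := (mul_eq_zero.mp h4).resolve_left (by positivity)
        rcases le_or_gt u 0 with hu0|hu0
        · nlinarith [hkey, pow_pos hr 3, mul_pos hs hs]
        · have hru0 : (r-u)*(r+u) = 0 := by linear_combination hru
          have hruu : r = u := by
            rcases mul_eq_zero.mp hru0 with h|h
            · linarith
            · exfalso; linarith
          have hs2u : 0 < s^2 - u^2 := by nlinarith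
          nlinarith [hkey, mul_pos hu0 hs2u]
    -- main case
    have hG := core_G u v r s hr hs hv hru hsu hr2 hwedge
    have hw1key : w1*r^3 = (u*w1+v*w2)*(r^3+s^3) := by linear_combination -hcrit
    have hw2key : v*w2*r^3 = (u*w1+v*w2)*(r^3 - u*(r^3+s^3)) := by
      linear_combination (-u) * hw1key
    have hP1sq : 0 < (u*w1+v*w2)^2 := pow_two_pos_of_ne_zero hP1
    have hv2 : 0 < v^2 := pow_two_pos_of_ne_zero hv
    have hEkey : (3*(u*w1+v*w2)^2*s^5 + 3*((u-1)*w1+v*w2)^2*r^5 - (w1^2+w2^2)*(r^2*s^5+s^2*r^5))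
        * (v^2*r^6)
        = (u*w1+v*w2)^2*(r^2*s^2) *
          (3*(r^3*s^3)*((r+s)*v^2) - (r^3+s^3)*((r^3+s^3)^2*v^2 + (r^3 - u*(r^3+s^3))^2)) := by
      linear_combination (3*v^2*r^5*(((u-1)*w1+v*w2)*r^3-(u*w1+v*w2)*s^3))*hcrit
        + (-(r^2*s^5+s^2*r^5)*v^2*(w1*r^3+(u*w1+v*w2)*(r^3+s^3)))*hw1key
        + (-(r^2*s^5+s^2*r^5)*(v*w2*r^3+(u*w1+v*w2)*(r^3 - u*(r^3+s^3))))*hw2key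
    have hfac2 : 0 < (u*w1+v*w2)^2*(r^2*s^2) := by positivity
    have hneg : (3*(u*w1+v*w2)^2*s^5 + 3*((u-1)*w1+v*w2)^2*r^5 - (w1^2+w2^2)*(r^2*s^5+s^2*r^5))
        * (v^2*r^6) < 0 := by
      rw [hEkey]
      apply mul_neg_of_pos_of_neg hfac2
      linarith [hG]
    have hK2 : 0 < v^2*r^6 := by positivity
    by_contra hcon
    push_neg at hcon
    nlinarith [hneg, mul_nonneg (by linarith [hcon] :
      (0:ℝ) ≤ 3*(u*w1+v*w2)^2*s^5 + 3*((u-1)*w1+v*w2)^2*r^5 - (w1^2+w2^2)*(r^2*s^5+s^2*r^5)) hK2.le]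

private lemma min_principle (g g' g'' : ℝ → ℝ)
    (hg : ∀ t ∈ Set.Icc (0:ℝ) 1, HasDerivAt g (g' t) t)
    (hg' : ∀ t ∈ Set.Icc (0:ℝ) 1, HasDerivAt g' (g'' t) t)
    (hkey : ∀ t ∈ Set.Ioo (0:ℝ) 1, g' t = 0 → g'' t < 0)
    (m : ℝ) (h0 : m ≤ g 0) (h1 : m ≤ g 1) :
    ∀ t ∈ Set.Icc (0:ℝ) 1, m ≤ g t := by
  by_contra hcon
  push_neg at hcon
  obtain ⟨t0, ht0, hlt⟩ := hcon
  have hcont : ContinuousOn g (Set.Icc 0 1) :=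
    fun t ht => (hg t ht).continuousAt.continuousWithinAt
  obtain ⟨tm, htm, hmin⟩ := (isCompact_Icc).exists_isMinOn
    (Set.nonempty_Icc.mpr (by norm_num)) hcont
  have hmlt : g tm < m := lt_of_le_of_lt (hmin ht0) hlt
  have htm0 : (0:ℝ) < tm := by
    rcases htm.1.lt_or_eq with h|h
    · exact h
    · exfalso; rw [← h] at hmlt; linarith
  have htm1 : tm < 1 := by
    rcases htm.2.lt_or_eq with h|h
    · exact h
    · exfalso; rw [h] at hmlt; linarith
  have hloc : IsLocalMin g tm := hmin.isLocalMin (Icc_mem_nhds htm0 htm1)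
  have hd0 : g' tm = 0 := hloc.hasDerivAt_eq_zero (hg tm htm)
  have hdd : g'' tm < 0 := hkey tm ⟨htm0, htm1⟩ hd0
  have hderiv : HasDerivAt g' (g'' tm) tm := hg' tm htm
  have hsl : Filter.Tendsto (slope g' tm) (nhdsWithin tm {tm}ᶜ) (nhds (g'' tm)) :=
    hasDerivAt_iff_tendsto_slope.mp hderiv
  have hev : ∀ᶠ s in nhdsWithin tm {tm}ᶜ, slope g' tm s < 0 :=
    hsl.eventually_lt_const hdd
  have hev2 : ∀ᶠ s in nhdsWithin tm (Set.Ioi tm), slope g' tm s < 0 :=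
    hev.filter_mono (nhdsWithin_mono tm (fun s hs => ne_of_gt hs))
  obtain ⟨S, hSmem, hSneg⟩ := hev2.exists_mem
  obtain ⟨uu, huu, hIoc⟩ := mem_nhdsGT_iff_exists_Ioc_subset.mp hSmem
  set τ := min uu ((tm+1)/2) with hτdef
  have hτgt : tm < τ := lt_min huu.out (by linarith)
  have hτlt1 : τ < 1 := lt_of_le_of_lt (min_le_right _ _) (by linarith)
  have hτmem : τ ∈ Set.Icc (0:ℝ) 1 := ⟨by linarith, hτlt1.le⟩
  have hsub : Set.Icc tm τ ⊆ Set.Icc (0:ℝ) 1 :=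
    Set.Icc_subset_Icc (by linarith) hτlt1.le
  have hanti : StrictAntiOn g (Set.Icc tm τ) := by
    apply strictAntiOn_of_deriv_neg (convex_Icc _ _)
      (hcont.mono hsub)
    intro s hs
    rw [interior_Icc] at hs
    have hsmem : s ∈ Set.Icc (0:ℝ) 1 := hsub ⟨hs.1.le, hs.2.le⟩
    rw [(hg s hsmem).deriv]
    have hslope : slope g' tm s < 0 := hSneg s (hIoc ⟨hs.1, le_of_lt (lt_of_lt_of_le hs.2 (min_le_left _ _))⟩)
    rw [slope_def_field] at hslope
    have hne : s - tm > 0 := by linarith [hs.1]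
    rw [hd0] at hslope
    rcases div_neg_iff.mp hslope with ⟨ha, hb⟩|⟨ha, hb⟩ <;> linarith
  have hless : g τ < g tm := hanti (Set.left_mem_Icc.mpr hτgt.le) (Set.right_mem_Icc.mpr hτgt.le) hτgt
  exact absurd (hmin hτmem) (by simpa using not_le.mpr hless)

private lemma piece_d1 (a b w1 w2 t : ℝ) (hQ : 0 < (a+t*w1)^2 + (b+t*w2)^2) :
    HasDerivAt (fun τ => 1/Real.sqrt ((a+τ*w1)^2 + (b+τ*w2)^2))
      (-(((a+t*w1)*w1+(b+t*w2)*w2)/(Real.sqrt ((a+t*w1)^2+(b+t*w2)^2))^3)) t := by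
  have h1 : HasDerivAt (fun τ : ℝ => a + τ*w1) w1 t := by
    simpa using ((hasDerivAt_id t).mul_const w1).const_add a
  have h2 : HasDerivAt (fun τ : ℝ => b + τ*w2) w2 t := by
    simpa using ((hasDerivAt_id t).mul_const w2).const_add b
  have hQ' : HasDerivAt (fun τ => (a+τ*w1)^2+(b+τ*w2)^2)
      (2*((a+t*w1)*w1+(b+t*w2)*w2)) t := by
    have h := (h1.pow 2).add (h2.pow 2)
    exact h.congr_deriv (by ring)
  set R := Real.sqrt ((a+t*w1)^2+(b+t*w2)^2) with hRdef
  have hRpos : 0 < R := Real.sqrt_pos.mpr hQ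
  have hne : R ≠ 0 := ne_of_gt hRpos
  have hsq : HasDerivAt (fun τ => Real.sqrt ((a+τ*w1)^2+(b+τ*w2)^2))
      (2*((a+t*w1)*w1+(b+t*w2)*w2)/(2*R)) t := by
    have h := (Real.hasDerivAt_sqrt (ne_of_gt hQ)).comp t hQ'
    refine h.congr_deriv ?_
    rw [← hRdef]
    ring
  have hinv := hsq.inv hne
  have hval : -(((a+t*w1)*w1+(b+t*w2)*w2)/R^3)
      = -(2*((a+t*w1)*w1+(b+t*w2)*w2)/(2*R))/R^2 := by
    field_simp
  simp only [one_div]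
  rw [hval]
  exact hinv

private lemma piece_d2 (a b w1 w2 t : ℝ) (hQ : 0 < (a+t*w1)^2 + (b+t*w2)^2) :
    HasDerivAt (fun τ => -(((a+τ*w1)*w1+(b+τ*w2)*w2)/(Real.sqrt ((a+τ*w1)^2+(b+τ*w2)^2))^3))
      (3*((a+t*w1)*w1+(b+t*w2)*w2)^2/(Real.sqrt ((a+t*w1)^2+(b+t*w2)^2))^5
        - (w1^2+w2^2)/(Real.sqrt ((a+t*w1)^2+(b+t*w2)^2))^3) t := by
  have h1 : HasDerivAt (fun τ : ℝ => a + τ*w1) w1 t := by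
    simpa using ((hasDerivAt_id t).mul_const w1).const_add a
  have h2 : HasDerivAt (fun τ : ℝ => b + τ*w2) w2 t := by
    simpa using ((hasDerivAt_id t).mul_const w2).const_add b
  have hQ' : HasDerivAt (fun τ => (a+τ*w1)^2+(b+τ*w2)^2)
      (2*((a+t*w1)*w1+(b+t*w2)*w2)) t := by
    have h := (h1.pow 2).add (h2.pow 2)
    exact h.congr_deriv (by ring)
  set R := Real.sqrt ((a+t*w1)^2+(b+t*w2)^2) with hRdef
  have hRpos : 0 < R := Real.sqrt_pos.mpr hQ
  have hne : R ≠ 0 := ne_of_gt hRpos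
  have hsq : HasDerivAt (fun τ => Real.sqrt ((a+τ*w1)^2+(b+τ*w2)^2))
      (2*((a+t*w1)*w1+(b+t*w2)*w2)/(2*R)) t := by
    have h := (Real.hasDerivAt_sqrt (ne_of_gt hQ)).comp t hQ'
    refine h.congr_deriv ?_
    rw [← hRdef]
    ring
  have hP' : HasDerivAt (fun τ => (a+τ*w1)*w1+(b+τ*w2)*w2) (w1^2+w2^2) t := by
    have h := (h1.mul_const w1).add (h2.mul_const w2)
    exact h.congr_deriv (by ring)
  have hcube : HasDerivAt (fun τ => (Real.sqrt ((a+τ*w1)^2+(b+τ*w2)^2))^3)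
      (3*R^2 * (2*((a+t*w1)*w1+(b+t*w2)*w2)/(2*R))) t := by
    have h := hsq.pow 3
    exact h.congr_deriv (by ring)
  have hcubene : R^3 ≠ 0 := pow_ne_zero 3 hne
  have hdiv := (hP'.div hcube hcubene).neg
  have hval : 3*((a+t*w1)*w1+(b+t*w2)*w2)^2/R^5 - (w1^2+w2^2)/R^3
      = -(((w1^2+w2^2)*R^3 - ((a+t*w1)*w1+(b+t*w2)*w2)*(3*R^2*(2*((a+t*w1)*w1+(b+t*w2)*w2)/(2*R))))/(R^3)^2) := by
    field_simp
    ring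
  rw [hval]
  exact hdiv

private lemma seg_min (x1 x2 w1 w2 aa : ℝ)
    (hw : ¬(w1 = 0 ∧ w2 = 0))
    (hQ1 : ∀ t ∈ Set.Icc (0:ℝ) 1, 0 < (x1+t*w1)^2 + (x2+t*w2)^2)
    (hQ2 : ∀ t ∈ Set.Icc (0:ℝ) 1, 0 < ((x1-1)+t*w1)^2 + (x2+t*w2)^2)
    (hhalf : ∀ t ∈ Set.Icc (0:ℝ) 1, x1+t*w1 < 1/2)
    (hrr : ∀ t ∈ Set.Icc (0:ℝ) 1, 2*Real.sqrt ((x1+t*w1)^2 + (x2+t*w2)^2) < 1)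
    (hwedge : ∀ t ∈ Set.Icc (0:ℝ) 1, 2*(x2+t*w2)^2 ≤ (1-2*(x1+t*w1))^2)
    (hend0 : aa ≤ 1/Real.sqrt ((x1+0*w1)^2+(x2+0*w2)^2) + 1/Real.sqrt (((x1-1)+0*w1)^2+(x2+0*w2)^2))
    (hend1 : aa ≤ 1/Real.sqrt ((x1+1*w1)^2+(x2+1*w2)^2) + 1/Real.sqrt (((x1-1)+1*w1)^2+(x2+1*w2)^2)) :
    ∀ t ∈ Set.Icc (0:ℝ) 1,
      aa ≤ 1/Real.sqrt ((x1+t*w1)^2+(x2+t*w2)^2) + 1/Real.sqrt (((x1-1)+t*w1)^2+(x2+t*w2)^2) := by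
  have hs_half : ∀ t ∈ Set.Icc (0:ℝ) 1, 1 ≤ 2*Real.sqrt (((x1-1)+t*w1)^2+(x2+t*w2)^2) := by
    intro t ht
    have h := hhalf t ht
    have h14 : ((1:ℝ)/2)^2 ≤ ((x1-1)+t*w1)^2+(x2+t*w2)^2 := by nlinarith [sq_nonneg (x2+t*w2)]
    have h2 := Real.sqrt_le_sqrt h14
    rw [Real.sqrt_sq (by norm_num : (0:ℝ) ≤ 1/2)] at h2
    linarith
  set g : ℝ → ℝ := fun t => 1/Real.sqrt ((x1+t*w1)^2+(x2+t*w2)^2)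
      + 1/Real.sqrt (((x1-1)+t*w1)^2+(x2+t*w2)^2) with hgdef
  set gd : ℝ → ℝ := fun t =>
      (-(((x1+t*w1)*w1+(x2+t*w2)*w2)/(Real.sqrt ((x1+t*w1)^2+(x2+t*w2)^2))^3))
      + (-((((x1-1)+t*w1)*w1+(x2+t*w2)*w2)/(Real.sqrt (((x1-1)+t*w1)^2+(x2+t*w2)^2))^3)) with hgddef
  set gdd : ℝ → ℝ := fun t =>
      (3*((x1+t*w1)*w1+(x2+t*w2)*w2)^2/(Real.sqrt ((x1+t*w1)^2+(x2+t*w2)^2))^5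
        - (w1^2+w2^2)/(Real.sqrt ((x1+t*w1)^2+(x2+t*w2)^2))^3)
      + (3*(((x1-1)+t*w1)*w1+(x2+t*w2)*w2)^2/(Real.sqrt (((x1-1)+t*w1)^2+(x2+t*w2)^2))^5
        - (w1^2+w2^2)/(Real.sqrt (((x1-1)+t*w1)^2+(x2+t*w2)^2))^3) with hgdddef
  have hg : ∀ t ∈ Set.Icc (0:ℝ) 1, HasDerivAt g (gd t) t := by
    intro t ht
    exact (piece_d1 x1 x2 w1 w2 t (hQ1 t ht)).add (piece_d1 (x1-1) x2 w1 w2 t (hQ2 t ht))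
  have hg' : ∀ t ∈ Set.Icc (0:ℝ) 1, HasDerivAt gd (gdd t) t := by
    intro t ht
    exact (piece_d2 x1 x2 w1 w2 t (hQ1 t ht)).add (piece_d2 (x1-1) x2 w1 w2 t (hQ2 t ht))
  have hkey : ∀ t ∈ Set.Ioo (0:ℝ) 1, gd t = 0 → gdd t < 0 := by
    intro t ht hcrit0
    have ht' : t ∈ Set.Icc (0:ℝ) 1 := ⟨ht.1.le, ht.2.le⟩
    have hQ1t : 0 < (x1+t*w1)^2+(x2+t*w2)^2 := hQ1 t ht'
    have hQ2t : 0 < ((x1-1)+t*w1)^2+(x2+t*w2)^2 := hQ2 t ht'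
    set u := x1 + t*w1 with hudef
    set v := x2 + t*w2 with hvdef
    have hu1 : (x1-1)+t*w1 = u - 1 := by rw [hudef]; ring
    rw [hu1] at hQ2t
    set r := Real.sqrt (u^2+v^2) with hrdef
    set s := Real.sqrt ((u-1)^2+v^2) with hsdef
    have hrpos : 0 < r := Real.sqrt_pos.mpr hQ1t
    have hspos : 0 < s := Real.sqrt_pos.mpr hQ2t
    have hru : r^2 = u^2+v^2 := Real.sq_sqrt hQ1t.le
    have hsu : s^2 = (u-1)^2+v^2 := Real.sq_sqrt hQ2t.le
    have hr2 : 2*r < 1 := hrr t ht'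
    have hs2 : 1 ≤ 2*s := by
      have h := hs_half t ht'
      rw [hu1] at h
      exact h
    have hwt : 2*v^2 ≤ (1-2*u)^2 := hwedge t ht'
    have hgd_eq : gd t = -((u*w1+v*w2)/r^3) + -(((u-1)*w1+v*w2)/s^3) := by
      rw [hgddef]
      simp only []
      rw [hu1]
    have hcrit : (u*w1+v*w2)*s^3 + ((u-1)*w1+v*w2)*r^3 = 0 := by
      have h0 : -((u*w1+v*w2)/r^3) + -(((u-1)*w1+v*w2)/s^3) = 0 := by
        rw [← hgd_eq]; exact hcrit0
      have hr3 : (r:ℝ)^3 ≠ 0 := by positivity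
      have hs3 : (s:ℝ)^3 ≠ 0 := by positivity
      field_simp at h0
      linarith [h0]
    have hE := deriv2_neg u v w1 w2 r s hrpos hspos hru hsu hr2 hs2 hw hwt hcrit
    have hgdd_eq : gdd t = (3*(u*w1+v*w2)^2/r^5 - (w1^2+w2^2)/r^3)
        + (3*((u-1)*w1+v*w2)^2/s^5 - (w1^2+w2^2)/s^3) := by
      rw [hgdddef]
      simp only []
      rw [hu1]
    have hid : gdd t * (r^5*s^5)
        = 3*(u*w1+v*w2)^2*s^5 + 3*((u-1)*w1+v*w2)^2*r^5 - (w1^2+w2^2)*(r^2*s^5+s^2*r^5) := by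
      rw [hgdd_eq]
      have hr0 : (r:ℝ) ≠ 0 := ne_of_gt hrpos
      have hs0 : (s:ℝ) ≠ 0 := ne_of_gt hspos
      field_simp
      ring
    have hK : 0 < r^5*s^5 := by positivity
    nlinarith [hid, hE, hK]
  have hmain := min_principle g gd gdd hg hg' hkey aa hend0 hend1
  exact hmain

private lemma sigma_ge_one (x1 x2 r s : ℝ) (hr : 0 ≤ r) (hs : 0 ≤ s)
    (hr2 : r^2 = x1^2+x2^2) (hs2 : s^2 = (x1-1)^2+x2^2) : 1 ≤ r + s := by
  have hcs : (x1*(x1-1)+x2^2)^2 ≤ (r*s)^2 := by nlinarith [sq_nonneg x2]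
  have h1 : -(x1*(x1-1)+x2^2) ≤ r*s := by nlinarith [hcs, mul_nonneg hr hs]
  have h2 : 1 ≤ (r+s)^2 := by nlinarith [h1]
  nlinarith [h2, add_nonneg hr hs]

private lemma mem_wedge (x1 x2 r s : ℝ) (hr : 0 ≤ r) (hs : 0 ≤ s)
    (hr2 : r^2 = x1^2+x2^2) (hs2 : s^2 = (x1-1)^2+x2^2) (h4 : 4*(r*s) ≤ r+s) :
    2*x2^2 ≤ (1-2*x1)^2 := by
  have hσ : 1 ≤ r + s := sigma_ge_one x1 x2 r s hr hs hr2 hs2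
  have hA : (0:ℝ) ≤ (r-s)^2 - ((r+s)^2 - (r+s)) := by nlinarith [h4]
  have hB : (0:ℝ) ≤ 3*(r+s)^2 - 1 := by nlinarith [hσ]
  have hC : (0:ℝ) ≤ 3*(r+s)^2 + 3*(r+s) + 1 := by nlinarith [hσ]
  nlinarith [mul_nonneg hA hB, mul_nonneg (sq_nonneg (r+s-1)) hC]

private lemma mem_r_lt (aa r s : ℝ) (ha : 4 < aa) (hr : 0 ≤ r) (hs : 1 ≤ 2*s)
    (hm : aa*(r*s) ≤ r + s) : 2*r < 1 := by
  have h1 : 0 < aa*s - 2*s - 1 := by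
    nlinarith [mul_nonneg (by linarith : (0:ℝ) ≤ aa-4) (by linarith : (0:ℝ) ≤ 2*s-1)]
  rcases eq_or_lt_of_le hr with h0|h0
  · linarith
  · nlinarith [mul_pos h0 h1]

private lemma mem_f (aa r s : ℝ) (hr : 0 < r) (hs : 0 < s) (hm : aa*(r*s) ≤ r+s) :
    aa ≤ 1/r + 1/s := by
  rw [div_add_div _ _ (ne_of_gt hr) (ne_of_gt hs), le_div_iff₀ (mul_pos hr hs)]
  nlinarith [hm]

private lemma star_lemma (aa x1 x2 τ : ℝ) (ha : 4 < aa) (hτ0 : 0 ≤ τ) (hτ1 : τ ≤ 1)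
    (h12 : x1 < 1/2)
    (hm : aa*(Real.sqrt (x1^2+x2^2) * Real.sqrt ((x1-1)^2+x2^2))
      ≤ Real.sqrt (x1^2+x2^2) + Real.sqrt ((x1-1)^2+x2^2)) :
    aa*(Real.sqrt ((τ*x1)^2+(τ*x2)^2) * Real.sqrt ((τ*x1-1)^2+(τ*x2)^2))
      ≤ Real.sqrt ((τ*x1)^2+(τ*x2)^2) + Real.sqrt ((τ*x1-1)^2+(τ*x2)^2) := by
  set r := Real.sqrt (x1^2+x2^2) with hrdef
  set s := Real.sqrt ((x1-1)^2+x2^2) with hsdef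
  have hr : 0 ≤ r := Real.sqrt_nonneg _
  have hs : 0 ≤ s := Real.sqrt_nonneg _
  have hr2 : r^2 = x1^2+x2^2 := Real.sq_sqrt (by positivity)
  have hs2 : s^2 = (x1-1)^2+x2^2 := Real.sq_sqrt (by positivity)
  have hs12 : 1 ≤ 2*s := by
    have h14 : ((1:ℝ)/2)^2 ≤ (x1-1)^2+x2^2 := by nlinarith [sq_nonneg x2]
    have h2 := Real.sqrt_le_sqrt h14
    rw [Real.sqrt_sq (by norm_num : (0:ℝ) ≤ 1/2)] at h2
    rw [hsdef]; linarith
  have hrτ : Real.sqrt ((τ*x1)^2+(τ*x2)^2) = τ*r := by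
    rw [show (τ*x1)^2+(τ*x2)^2 = τ^2*(x1^2+x2^2) by ring, Real.sqrt_mul (sq_nonneg τ),
      Real.sqrt_sq hτ0, hrdef]
  set sτ := Real.sqrt ((τ*x1-1)^2+(τ*x2)^2) with hsτdef
  have hsτ0 : 0 ≤ sτ := Real.sqrt_nonneg _
  have hτx : τ*x1 < 1/2 := by
    rcases le_or_gt 0 x1 with h|h
    · nlinarith
    · nlinarith
  have hsτ12 : 1 ≤ 2*sτ := by
    have h14 : ((1:ℝ)/2)^2 ≤ (τ*x1-1)^2+(τ*x2)^2 := by nlinarith [sq_nonneg (τ*x2)]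
    have h2 := Real.sqrt_le_sqrt h14
    rw [Real.sqrt_sq (by norm_num : (0:ℝ) ≤ 1/2)] at h2
    rw [hsτdef]; linarith
  have hslb : 1 - x1 ≤ s := by
    have h2 := Real.sqrt_le_sqrt (show (x1-1)^2 ≤ (x1-1)^2+x2^2 by nlinarith [sq_nonneg x2])
    rw [Real.sqrt_sq_eq_abs] at h2
    have h3 : (1-x1) ≤ |x1-1| := by rw [abs_sub_comm]; exact le_abs_self _
    rw [hsdef]; linarith
  have hsτub : sτ ≤ τ*s + (1-τ) := by
    have h1 : (τ*x1-1)^2+(τ*x2)^2 ≤ (τ*s+(1-τ))^2 := by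
      nlinarith [hs2, sq_nonneg τ,
        mul_nonneg (mul_nonneg hτ0 (by linarith : (0:ℝ) ≤ 1-τ)) (by linarith : (0:ℝ) ≤ s+x1-1)]
    have h2 := Real.sqrt_le_sqrt h1
    rw [Real.sqrt_sq (by nlinarith : (0:ℝ) ≤ τ*s+(1-τ))] at h2
    rw [hsτdef]; linarith
  rw [hrτ]
  have hkey : τ*s*(aa*sτ-1) ≤ sτ*(aa*s-1) := by
    have h1 : 0 ≤ (1-τ)*(aa*(s*sτ)-1) := by
      apply mul_nonneg (by linarith)
      nlinarith [mul_nonneg hs hsτ0]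
    nlinarith [h1, hsτub]
  have haspos : 0 < aa*s - 1 := by nlinarith
  have hasτpos : 0 ≤ aa*sτ - 1 := by nlinarith
  have e1 : τ*r*(aa*s-1) ≤ τ*s := by nlinarith [hm, hτ0]
  have e2 : τ*r*(aa*s-1)*(aa*sτ-1) ≤ τ*s*(aa*sτ-1) := mul_le_mul_of_nonneg_right e1 hasτpos
  have e5 : τ*r*(aa*sτ-1) ≤ sτ := by nlinarith [e2, hkey, haspos]
  nlinarith [e5]

private lemma f_mem (aa r s : ℝ) (hr : 0 < r) (hs : 0 < s) (hf : aa ≤ 1/r+1/s) :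
    aa*(r*s) ≤ r+s := by
  rw [div_add_div _ _ (ne_of_gt hr) (ne_of_gt hs), le_div_iff₀ (mul_pos hr hs)] at hf
  nlinarith [hf]

private lemma s_half (x1 x2 : ℝ) (h : x1 < 1/2) : 1 ≤ 2*Real.sqrt ((x1-1)^2+x2^2) := by
  have h14 : ((1:ℝ)/2)^2 ≤ (x1-1)^2+x2^2 := by nlinarith [sq_nonneg x2]
  have h2 := Real.sqrt_le_sqrt h14
  rw [Real.sqrt_sq (by norm_num : (0:ℝ) ≤ 1/2)] at h2
  linarith

private lemma cs_lemma (x1 x2 y1 y2 : ℝ) :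
    x1*y1+x2*y2 ≤ Real.sqrt (x1^2+x2^2) * Real.sqrt (y1^2+y2^2) := by
  have hx : (Real.sqrt (x1^2+x2^2))^2 = x1^2+x2^2 := Real.sq_sqrt (by positivity)
  have hy : (Real.sqrt (y1^2+y2^2))^2 = y1^2+y2^2 := Real.sq_sqrt (by positivity)
  have h0 : 0 ≤ Real.sqrt (x1^2+x2^2) * Real.sqrt (y1^2+y2^2) :=
    mul_nonneg (Real.sqrt_nonneg _) (Real.sqrt_nonneg _)
  nlinarith [sq_nonneg (x1*y2-x2*y1), h0, hx, hy]

private lemma sqrt_comb (x1 x2 y1 y2 t : ℝ) (ht0 : 0 ≤ t) (ht1 : t ≤ 1) :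
    Real.sqrt ((x1+t*(y1-x1))^2 + (x2+t*(y2-x2))^2)
      ≤ (1-t)*Real.sqrt (x1^2+x2^2) + t*Real.sqrt (y1^2+y2^2) := by
  have hx : (Real.sqrt (x1^2+x2^2))^2 = x1^2+x2^2 := Real.sq_sqrt (by positivity)
  have hy : (Real.sqrt (y1^2+y2^2))^2 = y1^2+y2^2 := Real.sq_sqrt (by positivity)
  have hcs := cs_lemma x1 x2 y1 y2
  have e1 : (1-t)^2*(Real.sqrt (x1^2+x2^2))^2 = (1-t)^2*(x1^2+x2^2) := by rw [hx]
  have e2 : t^2*(Real.sqrt (y1^2+y2^2))^2 = t^2*(y1^2+y2^2) := by rw [hy]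
  have h1 : (x1+t*(y1-x1))^2 + (x2+t*(y2-x2))^2
      ≤ ((1-t)*Real.sqrt (x1^2+x2^2) + t*Real.sqrt (y1^2+y2^2))^2 := by
    nlinarith [e1, e2, mul_nonneg (mul_nonneg ht0 (by linarith : (0:ℝ) ≤ 1-t))
      (sub_nonneg.mpr hcs)]
  have h2 := Real.sqrt_le_sqrt h1
  have h3 : (0:ℝ) ≤ (1-t)*Real.sqrt (x1^2+x2^2) + t*Real.sqrt (y1^2+y2^2) := by
    have := Real.sqrt_nonneg (x1^2+x2^2); have := Real.sqrt_nonneg (y1^2+y2^2)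
    have ht1' : (0:ℝ) ≤ 1-t := by linarith
    positivity
  rwa [Real.sqrt_sq h3] at h2

private lemma wedge_comb (x1 x2 y1 y2 t : ℝ) (ht0 : 0 ≤ t) (ht1 : t ≤ 1)
    (hx12 : x1 < 1/2) (hy12 : y1 < 1/2)
    (hwx : 2*x2^2 ≤ (1-2*x1)^2) (hwy : 2*y2^2 ≤ (1-2*y1)^2) :
    2*(x2+t*(y2-x2))^2 ≤ (1-2*(x1+t*(y1-x1)))^2 := by
  have hA : (0:ℝ) ≤ 1-2*x1 := by linarith
  have hB : (0:ℝ) ≤ 1-2*y1 := by linarith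
  have hAB : 2*(x2*y2) ≤ (1-2*x1)*(1-2*y1) := by
    nlinarith [mul_nonneg hA hB, hwx, hwy, sq_nonneg ((1-2*x1)*(1-2*y1) - 2*x2*y2),
      sq_nonneg ((1-2*x1)*y2 - (1-2*y1)*x2), sq_nonneg ((1-2*x1)*y2 + (1-2*y1)*x2)]
  nlinarith [hAB, hwx, hwy, mul_nonneg (mul_nonneg ht0 (by linarith : (0:ℝ) ≤ 1-t))
    (sub_nonneg.mpr hAB), sq_nonneg t, sq_nonneg (1-t)]

/-- In the equal-mass Euler problem, for every energy `c < −2` the Earth component of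
the Hill region, together with the collision point, is convex. -/
theorem stmt_19 (c : ℝ) (hc : c < -2) :
    Convex ℝ
      ({((0 : ℝ), (0 : ℝ))} ∪
        {q : ℝ × ℝ | q ≠ (0, 0) ∧ q.1 < 1 / 2 ∧
          -(1 / 2) / Real.sqrt (q.1 ^ 2 + q.2 ^ 2)
            - (1 / 2) / Real.sqrt ((q.1 - 1) ^ 2 + q.2 ^ 2) ≤ c}) := by
  have ha : 4 < -2*c := by linarith
  have memiff : ∀ q1 q2 : ℝ, ((q1,q2) ∈ ({((0 : ℝ), (0 : ℝ))} ∪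
        {q : ℝ × ℝ | q ≠ (0, 0) ∧ q.1 < 1 / 2 ∧
          -(1 / 2) / Real.sqrt (q.1 ^ 2 + q.2 ^ 2)
            - (1 / 2) / Real.sqrt ((q.1 - 1) ^ 2 + q.2 ^ 2) ≤ c}) ↔
      (q1 < 1/2 ∧ (-2*c)*(Real.sqrt (q1^2+q2^2) * Real.sqrt ((q1-1)^2+q2^2))
        ≤ Real.sqrt (q1^2+q2^2) + Real.sqrt ((q1-1)^2+q2^2))) := by
    intro q1 q2
    constructor
    · rintro (h|h)
      · have e : q1 = 0 ∧ q2 = 0 := by simpa [Prod.ext_iff] using h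
        obtain ⟨e1, e2⟩ := e
        subst e1; subst e2
        constructor
        · norm_num
        · rw [show (0:ℝ)^2+0^2 = 0 by norm_num, show ((0:ℝ)-1)^2+0^2 = 1 by norm_num,
            Real.sqrt_zero, Real.sqrt_one]
          norm_num
      · obtain ⟨hne, h12, hU⟩ := h
        simp only [Set.mem_setOf_eq] at *
        refine ⟨h12, ?_⟩
        have hne' : ¬(q1 = 0 ∧ q2 = 0) := by simpa [Prod.ext_iff] using hne
        have hr0 : 0 < q1^2+q2^2 := by
          rcases not_and_or.mp hne' with h|h
          · nlinarith [pow_two_pos_of_ne_zero h, sq_nonneg q2]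
          · nlinarith [pow_two_pos_of_ne_zero h, sq_nonneg q1]
        have hs0 : 0 < (q1-1)^2+q2^2 := by nlinarith [sq_nonneg q2]
        have hrpos : 0 < Real.sqrt (q1^2+q2^2) := Real.sqrt_pos.mpr hr0
        have hspos : 0 < Real.sqrt ((q1-1)^2+q2^2) := Real.sqrt_pos.mpr hs0
        set r := Real.sqrt (q1^2+q2^2)
        set s := Real.sqrt ((q1-1)^2+q2^2)
        have h2 := mul_le_mul_of_nonneg_right hU (by positivity : (0:ℝ) ≤ 2*(r*s))
        have e : (-(1/2)/r - (1/2)/s)*(2*(r*s)) = -s - r := by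
          field_simp
        rw [e] at h2
        nlinarith [h2]
    · rintro ⟨h12, hm⟩
      by_cases h0 : q1 = 0 ∧ q2 = 0
      · left
        simp [Prod.ext_iff, h0.1, h0.2]
      · right
        simp only [Set.mem_setOf_eq]
        refine ⟨by simpa [Prod.ext_iff] using h0, h12, ?_⟩
        have hr0 : 0 < q1^2+q2^2 := by
          rcases not_and_or.mp h0 with h|h
          · nlinarith [pow_two_pos_of_ne_zero h, sq_nonneg q2]
          · nlinarith [pow_two_pos_of_ne_zero h, sq_nonneg q1]
        have hs0 : 0 < (q1-1)^2+q2^2 := by nlinarith [sq_nonneg q2]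
        have hrpos : 0 < Real.sqrt (q1^2+q2^2) := Real.sqrt_pos.mpr hr0
        have hspos : 0 < Real.sqrt ((q1-1)^2+q2^2) := Real.sqrt_pos.mpr hs0
        set r := Real.sqrt (q1^2+q2^2)
        set s := Real.sqrt ((q1-1)^2+q2^2)
        rw [show -(1/2)/r - (1/2)/s = (-s-r)/(2*(r*s)) by field_simp,
          div_le_iff₀ (by positivity : (0:ℝ) < 2*(r*s))]
        nlinarith [hm]
  -- now prove convexity
  rw [convex_iff_forall_pos]
  intro x hx y hy a b ha' hb' hab
  have hx' := (memiff x.1 x.2).mp (by simpa using hx)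
  have hy' := (memiff y.1 y.2).mp (by simpa using hy)
  obtain ⟨hx1, hxm⟩ := hx'
  obtain ⟨hy1, hym⟩ := hy'
  have hzeq : a•x+b•y = (a*x.1+b*y.1, a*x.2+b*y.2) := by
    ext <;> simp [Prod.smul_fst, Prod.smul_snd, smul_eq_mul]
  rw [hzeq]
  apply (memiff _ _).mpr
  have hz1 : a*x.1+b*y.1 < 1/2 := by nlinarith [hx1, hy1, ha', hb']
  refine ⟨hz1, ?_⟩

  -- main inequality
  by_cases hxy : x = y
  · subst hxy
    rw [show a*x.1+b*x.1 = x.1 from by linear_combination x.1*hab,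
      show a*x.2+b*x.2 = x.2 from by linear_combination x.2*hab]
    exact hxm
  · by_cases hsing : ∃ t ∈ Set.Icc (0:ℝ) 1, x.1 + t*(y.1-x.1) = 0 ∧ x.2 + t*(y.2-x.2) = 0
    · obtain ⟨tc, htc, hc1, hc2⟩ := hsing
      have hb1 : b < 1 := by linarith
      rcases le_or_gt b tc with hble|hbgt
      · have htc0 : 0 < tc := lt_of_lt_of_le hb' hble
        have hτ0 : 0 ≤ 1 - b/tc := by
          have h1 : b/tc ≤ 1 := (div_le_one htc0).mpr hble
          linarith
        have hτ1 : 1 - b/tc ≤ 1 := by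
          have h1 : 0 ≤ b/tc := div_nonneg hb'.le htc0.le
          linarith
        have e1 : a*x.1+b*y.1 = (1-b/tc)*x.1 := by
          field_simp
          linear_combination b*hc1 + x.1*tc*hab
        have e2 : a*x.2+b*y.2 = (1-b/tc)*x.2 := by
          field_simp
          linear_combination b*hc2 + x.2*tc*hab
        rw [e1, e2]
        exact star_lemma (-2*c) x.1 x.2 (1-b/tc) ha hτ0 hτ1 hx1 hxm
      · have htc1 : tc < 1 := lt_trans hbgt hb1
        have hτ0 : 0 ≤ (b-tc)/(1-tc) := div_nonneg (by linarith) (by linarith)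
        have hτ1 : (b-tc)/(1-tc) ≤ 1 := (div_le_one (by linarith)).mpr (by linarith)
        have hne1 : (1:ℝ)-tc ≠ 0 := by linarith
        have e1 : a*x.1+b*y.1 = ((b-tc)/(1-tc))*y.1 := by
          field_simp [hne1]
          linear_combination a*hc1 + (-(y.1*tc))*hab
        have e2 : a*x.2+b*y.2 = ((b-tc)/(1-tc))*y.2 := by
          field_simp [hne1]
          linear_combination a*hc2 + (-(y.2*tc))*hab
        rw [e1, e2]
        exact star_lemma (-2*c) y.1 y.2 ((b-tc)/(1-tc)) ha hτ0 hτ1 hy1 hym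
    · -- main segment case
      have hQ1pos : ∀ t ∈ Set.Icc (0:ℝ) 1, 0 < (x.1+t*(y.1-x.1))^2 + (x.2+t*(y.2-x.2))^2 := by
        intro t ht
        have hne : ¬(x.1+t*(y.1-x.1) = 0 ∧ x.2+t*(y.2-x.2) = 0) := by
          intro hcontra
          exact hsing ⟨t, ht, hcontra.1, hcontra.2⟩
        rcases not_and_or.mp hne with h|h
        · nlinarith [pow_two_pos_of_ne_zero h, sq_nonneg (x.2+t*(y.2-x.2))]
        · nlinarith [pow_two_pos_of_ne_zero h, sq_nonneg (x.1+t*(y.1-x.1))]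
      have hhalf : ∀ t ∈ Set.Icc (0:ℝ) 1, x.1+t*(y.1-x.1) < 1/2 := by
        intro t ht
        rcases eq_or_lt_of_le ht.1 with h0|h0
        · rw [← h0]; simpa using hx1
        · nlinarith [mul_pos h0 (by linarith : (0:ℝ) < 1/2 - y.1),
            mul_nonneg (by linarith [ht.2] : (0:ℝ) ≤ 1-t) (by linarith : (0:ℝ) ≤ 1/2 - x.1)]
      have hQ2pos : ∀ t ∈ Set.Icc (0:ℝ) 1, 0 < ((x.1-1)+t*(y.1-x.1))^2 + (x.2+t*(y.2-x.2))^2 := by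
        intro t ht
        have h := hhalf t ht
        nlinarith [sq_nonneg (x.2+t*(y.2-x.2))]
      have hw : ¬(y.1-x.1 = 0 ∧ y.2-x.2 = 0) := by
        intro hcontra
        apply hxy
        have h1 : x.1 = y.1 := by linarith [hcontra.1]
        have h2 : x.2 = y.2 := by linarith [hcontra.2]
        exact Prod.ext h1 h2
      -- endpoint data
      have hx1half := s_half x.1 x.2 hx1
      have hy1half := s_half y.1 y.2 hy1
      have hrx0 : 0 < x.1^2+x.2^2 := by simpa using hQ1pos 0 (by norm_num)
      have hry0 : 0 < y.1^2+y.2^2 := by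
        have := hQ1pos 1 (by norm_num)
        simpa using this
      have hrxpos : 0 < Real.sqrt (x.1^2+x.2^2) := Real.sqrt_pos.mpr hrx0
      have hrypos : 0 < Real.sqrt (y.1^2+y.2^2) := Real.sqrt_pos.mpr hry0
      have hsxpos : 0 < Real.sqrt ((x.1-1)^2+x.2^2) := Real.sqrt_pos.mpr (by nlinarith [sq_nonneg x.2])
      have hsypos : 0 < Real.sqrt ((y.1-1)^2+y.2^2) := Real.sqrt_pos.mpr (by nlinarith [sq_nonneg y.2])
      have hrx12 : 2*Real.sqrt (x.1^2+x.2^2) < 1 :=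
        mem_r_lt (-2*c) _ _ ha (Real.sqrt_nonneg _) hx1half hxm
      have hry12 : 2*Real.sqrt (y.1^2+y.2^2) < 1 :=
        mem_r_lt (-2*c) _ _ ha (Real.sqrt_nonneg _) hy1half hym
      have hrr : ∀ t ∈ Set.Icc (0:ℝ) 1, 2*Real.sqrt ((x.1+t*(y.1-x.1))^2 + (x.2+t*(y.2-x.2))^2) < 1 := by
        intro t ht
        have h1 := sqrt_comb x.1 x.2 y.1 y.2 t ht.1 ht.2
        nlinarith [h1, mul_nonneg (by linarith [ht.2] : (0:ℝ) ≤ 1-t)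
            (by linarith : (0:ℝ) ≤ 1 - 2*Real.sqrt (x.1^2+x.2^2)),
          mul_nonneg ht.1 (by linarith : (0:ℝ) ≤ 1 - 2*Real.sqrt (y.1^2+y.2^2))]
      have hwx : 2*x.2^2 ≤ (1-2*x.1)^2 := by
        apply mem_wedge x.1 x.2 _ _ (Real.sqrt_nonneg _) (Real.sqrt_nonneg _)
          (Real.sq_sqrt hrx0.le) (Real.sq_sqrt (by nlinarith [sq_nonneg x.2] : (0:ℝ) ≤ (x.1-1)^2+x.2^2))
        nlinarith [hxm, mul_nonneg (Real.sqrt_nonneg (x.1^2+x.2^2)) (Real.sqrt_nonneg ((x.1-1)^2+x.2^2))]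
      have hwy : 2*y.2^2 ≤ (1-2*y.1)^2 := by
        apply mem_wedge y.1 y.2 _ _ (Real.sqrt_nonneg _) (Real.sqrt_nonneg _)
          (Real.sq_sqrt hry0.le) (Real.sq_sqrt (by nlinarith [sq_nonneg y.2] : (0:ℝ) ≤ (y.1-1)^2+y.2^2))
        nlinarith [hym, mul_nonneg (Real.sqrt_nonneg (y.1^2+y.2^2)) (Real.sqrt_nonneg ((y.1-1)^2+y.2^2))]
      have hwedge2 : ∀ t ∈ Set.Icc (0:ℝ) 1, 2*(x.2+t*(y.2-x.2))^2 ≤ (1-2*(x.1+t*(y.1-x.1)))^2 := by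
        intro t ht
        exact wedge_comb x.1 x.2 y.1 y.2 t ht.1 ht.2 hx1 hy1 hwx hwy
      have hend0 : (-2*c) ≤ 1/Real.sqrt ((x.1+0*(y.1-x.1))^2+(x.2+0*(y.2-x.2))^2)
          + 1/Real.sqrt (((x.1-1)+0*(y.1-x.1))^2+(x.2+0*(y.2-x.2))^2) := by
        have h := mem_f (-2*c) _ _ hrxpos hsxpos hxm
        simpa using h
      have hend1 : (-2*c) ≤ 1/Real.sqrt ((x.1+1*(y.1-x.1))^2+(x.2+1*(y.2-x.2))^2)
          + 1/Real.sqrt (((x.1-1)+1*(y.1-x.1))^2+(x.2+1*(y.2-x.2))^2) := by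
        have h := mem_f (-2*c) _ _ hrypos hsypos hym
        rw [show x.1+1*(y.1-x.1) = y.1 from by ring, show x.2+1*(y.2-x.2) = y.2 from by ring,
          show (x.1-1)+1*(y.1-x.1) = y.1-1 from by ring]
        exact h
      have hseg := seg_min x.1 x.2 (y.1-x.1) (y.2-x.2) (-2*c) hw hQ1pos hQ2pos hhalf hrr hwedge2 hend0 hend1
      have hfb := hseg b ⟨hb'.le, by linarith⟩
      have hae : a = 1 - b := by linarith
      rw [show a*x.1+b*y.1 = x.1+b*(y.1-x.1) from by rw [hae]; ring,
        show a*x.2+b*y.2 = x.2+b*(y.2-x.2) from by rw [hae]; ring,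
        show (x.1+b*(y.1-x.1))-1 = (x.1-1)+b*(y.1-x.1) from by ring]
      exact f_mem (-2*c) _ _ (Real.sqrt_pos.mpr (hQ1pos b ⟨hb'.le, by linarith⟩))
        (Real.sqrt_pos.mpr (hQ2pos b ⟨hb'.le, by linarith⟩)) hfb
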